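/- Let (x̂, ŷ) : (−∞,0] → E₁ × E₂ be continuous with (x̂, ŷ) ∈ C_β^−(E₁ × E₂), and suppose that for all u ≤ t ≤ 0 it satisfies the variation-of-constants identities x̂(t) = exp(tS)x̂(0) + ∫₀^t exp((t−s)S) ĝ₁(s, x̂(s), ŷ(s)) ds and ŷ(t) = exp(((t−u)/ε)F) ŷ(u) + (1/ε)∫_u^t exp(((t−s)/ε)F) ĝ₂(s, x̂(s), ŷ(s)) ds. Then for every t ≤ 0 the improper integral (1/ε)∫_{−∞}^t exp(((t−s)/ε)F) ĝ₂(s, x̂(s), ŷ(s)) ds converges and equals ŷ(t); that is, (x̂, ŷ) satisfies the Lyapunov–Perron integral equation. -/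

import Mathlib

open MeasureTheory Real Filter Topology

noncomputable section

/-- Weighted sup-norm `sup_{t ≤ 0} e^{-β t} ‖φ t‖` on `(-∞,0]`. -/
def negNorm {E : Type*} [NormedAddCommGroup E] (β : ℝ) (φ : ℝ → E) : ℝ :=
  ⨆ t : Set.Iic (0 : ℝ), Real.exp (-β * t.1) * ‖φ t.1‖

/-- Membership in the Banach space `C_β^-(E)` of continuous functions on `(-∞,0]`
with finite weighted sup-norm. -/
def MemCneg {E : Type*} [NormedAddCommGroup E] (β : ℝ) (φ : ℝ → E) : Prop :=
  ContinuousOn φ (Set.Iic 0) ∧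
    BddAbove (Set.range fun t : Set.Iic (0 : ℝ) => Real.exp (-β * t.1) * ‖φ t.1‖)

/-- Weighted sup-norm `sup_{t ≥ 0} e^{-β t} ‖φ t‖` on `[0,∞)`. -/
def posNorm {E : Type*} [NormedAddCommGroup E] (β : ℝ) (φ : ℝ → E) : ℝ :=
  ⨆ t : Set.Ici (0 : ℝ), Real.exp (-β * t.1) * ‖φ t.1‖

/-- Membership in the Banach space `C_β^+(E)` of continuous functions on `[0,∞)`
with finite weighted sup-norm. -/
def MemCpos {E : Type*} [NormedAddCommGroup E] (β : ℝ) (φ : ℝ → E) : Prop :=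
  ContinuousOn φ (Set.Ici 0) ∧
    BddAbove (Set.range fun t : Set.Ici (0 : ℝ) => Real.exp (-β * t.1) * ‖φ t.1‖)

variable {E₁ E₂ : Type*}
  [NormedAddCommGroup E₁] [NormedSpace ℝ E₁]
  [NormedAddCommGroup E₂] [NormedSpace ℝ E₂]

/-- Slow component of the Lyapunov–Perron operator `I^ε_{x₀}`. -/
def LPslow (S : E₁ →L[ℝ] E₁) (g1 : ℝ → E₁ → E₂ → E₁) (x0 : E₁)
    (x : ℝ → E₁) (y : ℝ → E₂) (t : ℝ) : E₁ :=
  NormedSpace.exp (t • S) x0 +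
    ∫ s in (0:ℝ)..t, NormedSpace.exp ((t - s) • S) (g1 s (x s) (y s))

/-- Fast component of the Lyapunov–Perron operator `I^ε_{x₀}`. -/
def LPfast (F : E₂ →L[ℝ] E₂) (g2 : ℝ → E₁ → E₂ → E₂) (ε : ℝ)
    (x : ℝ → E₁) (y : ℝ → E₂) (t : ℝ) : E₂ :=
  (1/ε) • ∫ s in Set.Iic t, NormedSpace.exp (((t - s)/ε) • F) (g2 s (x s) (y s))

lemma integrableOn_exp_mul_Iic' {c : ℝ} (hc : 0 < c) (t : ℝ) :
    IntegrableOn (fun s => Real.exp (c * s)) (Set.Iic t) := by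
  rw [integrableOn_Iic_iff_integrableOn_Iio]
  have h := exp_neg_integrableOn_Ioi (-t) hc
  have h2 := (MeasurePreserving.integrableOn_comp_preimage
      (Measure.measurePreserving_neg (volume : Measure ℝ))
      (Homeomorph.neg ℝ).measurableEmbedding
      (f := fun x : ℝ => Real.exp (-c * x)) (s := Set.Ioi (-t))).2 h
  have hpre : (fun x : ℝ => -x) ⁻¹' Set.Ioi (-t) = Set.Iio t := by
    ext x; simp
  rw [hpre] at h2
  exact h2.congr_fun (fun x _ => by simp [Function.comp, neg_mul_neg]) measurableSet_Iio

/-- A `C_β^-` solution of the variation-of-constants identities satisfies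
the Lyapunov–Perron integral equation: the improper integral converges and equals `ŷ(t)`. -/
theorem variationOfConstants_implies_lyapunovPerron
    {E₁ E₂ : Type*}
    [NormedAddCommGroup E₁] [NormedSpace ℝ E₁] [FiniteDimensional ℝ E₁] [MeasurableSpace E₁] [BorelSpace E₁]
    [NormedAddCommGroup E₂] [NormedSpace ℝ E₂] [FiniteDimensional ℝ E₂] [MeasurableSpace E₂] [BorelSpace E₂]
    (S : E₁ →L[ℝ] E₁) (F : E₂ →L[ℝ] E₂)
    (γs γf γ K ε : ℝ)
    (hγs : 0 < γs) (hγf : γf < 0) (hγ : 0 < γ) (hK : 0 < K)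
    (hgap : K < -(γ + γf)) (hε : 0 < ε)
    (hS : ∀ t ≤ (0:ℝ), ∀ x : E₁, ‖NormedSpace.exp (t • S) x‖ ≤ Real.exp (γs * t) * ‖x‖)
    (hF : ∀ t ≥ (0:ℝ), ∀ y : E₂, ‖NormedSpace.exp (t • F) y‖ ≤ Real.exp (γf * t) * ‖y‖)
    (g1 : ℝ → E₁ → E₂ → E₁) (g2 : ℝ → E₁ → E₂ → E₂)
    (hg1m : ∀ x y, Measurable fun t => g1 t x y)
    (hg2m : ∀ x y, Measurable fun t => g2 t x y)
    (hg1b : ∀ x y r, ∃ M, ∀ t : ℝ, |t| ≤ r → ‖g1 t x y‖ ≤ M)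
    (hg2b : ∀ x y r, ∃ M, ∀ t : ℝ, |t| ≤ r → ‖g2 t x y‖ ≤ M)
    (hg1l : ∀ t x₁ y₁ x₂ y₂, ‖g1 t x₁ y₁ - g1 t x₂ y₂‖ ≤ K * (‖x₁ - x₂‖ + ‖y₁ - y₂‖))
    (hg2l : ∀ t x₁ y₁ x₂ y₂, ‖g2 t x₁ y₁ - g2 t x₂ y₂‖ ≤ K * (‖x₁ - x₂‖ + ‖y₁ - y₂‖))
    (hg0 : ∃ M, ∀ t ≤ (0:ℝ),
      Real.exp ((γ/ε) * t) * (‖g1 t 0 0‖ + ‖g2 t 0 0‖) ≤ M)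
    (xh : ℝ → E₁) (yh : ℝ → E₂)
    (hmem : MemCneg (-γ/ε) xh ∧ MemCneg (-γ/ε) yh)
    (hvocx : ∀ t ≤ (0:ℝ),
      xh t = NormedSpace.exp (t • S) (xh 0) +
        ∫ s in (0:ℝ)..t, NormedSpace.exp ((t - s) • S) (g1 s (xh s) (yh s)))
    (hvocy : ∀ u t : ℝ, u ≤ t → t ≤ 0 →
      yh t = NormedSpace.exp (((t - u)/ε) • F) (yh u) +
        (1/ε) • ∫ s in u..t, NormedSpace.exp (((t - s)/ε) • F) (g2 s (xh s) (yh s))) :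
    ∀ t ≤ (0:ℝ),
      IntegrableOn (fun s => NormedSpace.exp (((t - s)/ε) • F) (g2 s (xh s) (yh s)))
        (Set.Iic t) ∧
      yh t = LPfast F g2 ε xh yh t := by
  obtain ⟨⟨hxc, hxb⟩, hyc, hyb⟩ := hmem
  obtain ⟨Cx, hCx⟩ := hxb
  obtain ⟨Cy, hCy⟩ := hyb
  obtain ⟨M, hM⟩ := hg0
  -- pointwise weighted bounds
  have hx : ∀ s ≤ (0:ℝ), ‖xh s‖ ≤ Cx * Real.exp (-(γ/ε) * s) := by
    intro s hs
    have h := hCx (Set.mem_range_self (⟨s, hs⟩ : Set.Iic (0:ℝ)))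
    simp only [neg_div, neg_neg] at h
    have hp := Real.exp_pos (-(γ/ε) * s)
    have hee : Real.exp (-(γ/ε) * s) * Real.exp (γ/ε * s) = 1 := by
      rw [← Real.exp_add]; ring_nf; exact Real.exp_zero
    calc ‖xh s‖ = Real.exp (-(γ/ε) * s) * (Real.exp (γ/ε * s) * ‖xh s‖) := by
          rw [← mul_assoc, hee, one_mul]
      _ ≤ Real.exp (-(γ/ε) * s) * Cx := mul_le_mul_of_nonneg_left h hp.le
      _ = Cx * Real.exp (-(γ/ε) * s) := mul_comm _ _
  have hy : ∀ s ≤ (0:ℝ), ‖yh s‖ ≤ Cy * Real.exp (-(γ/ε) * s) := by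
    intro s hs
    have h := hCy (Set.mem_range_self (⟨s, hs⟩ : Set.Iic (0:ℝ)))
    simp only [neg_div, neg_neg] at h
    have hp := Real.exp_pos (-(γ/ε) * s)
    have hee : Real.exp (-(γ/ε) * s) * Real.exp (γ/ε * s) = 1 := by
      rw [← Real.exp_add]; ring_nf; exact Real.exp_zero
    calc ‖yh s‖ = Real.exp (-(γ/ε) * s) * (Real.exp (γ/ε * s) * ‖yh s‖) := by
          rw [← mul_assoc, hee, one_mul]
      _ ≤ Real.exp (-(γ/ε) * s) * Cy := mul_le_mul_of_nonneg_left h hp.le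
      _ = Cy * Real.exp (-(γ/ε) * s) := mul_comm _ _
  have hg00 : ∀ s ≤ (0:ℝ), ‖g2 s 0 0‖ ≤ M * Real.exp (-(γ/ε) * s) := by
    intro s hs
    have h := hM s hs
    have hp := Real.exp_pos (-(γ/ε) * s)
    have hee : Real.exp (-(γ/ε) * s) * Real.exp (γ/ε * s) = 1 := by
      rw [← Real.exp_add]; ring_nf; exact Real.exp_zero
    rw [mul_add] at h
    have h' : Real.exp (γ/ε * s) * ‖g2 s 0 0‖ ≤ M := by
      have := mul_nonneg (Real.exp_pos (γ/ε * s)).le (norm_nonneg (g1 s 0 0))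
      linarith
    calc ‖g2 s 0 0‖ = Real.exp (-(γ/ε) * s) * (Real.exp (γ/ε * s) * ‖g2 s 0 0‖) := by
          rw [← mul_assoc, hee, one_mul]
      _ ≤ Real.exp (-(γ/ε) * s) * M := mul_le_mul_of_nonneg_left h' hp.le
      _ = M * Real.exp (-(γ/ε) * s) := mul_comm _ _
  set C0 : ℝ := M + K * (Cx + Cy) with hC0
  have hgb : ∀ s ≤ (0:ℝ), ‖g2 s (xh s) (yh s)‖ ≤ C0 * Real.exp (-(γ/ε) * s) := by
    intro s hs
    have h1 : ‖g2 s (xh s) (yh s)‖ ≤ ‖g2 s 0 0‖ + K * (‖xh s‖ + ‖yh s‖) := by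
      have h2 := hg2l s (xh s) (yh s) 0 0
      simp only [sub_zero] at h2
      have h3 := norm_sub_norm_le (g2 s (xh s) (yh s)) (g2 s 0 0)
      linarith
    have := hx s hs
    have := hy s hs
    have := hg00 s hs
    nlinarith [hK.le, Real.exp_pos (-(γ/ε) * s)]
  intro t ht
  set f : ℝ → E₂ := fun s => NormedSpace.exp (((t - s)/ε) • F) (g2 s (xh s) (yh s)) with hf
  set c : ℝ := -((γf + γ)/ε) with hcdef
  have hc : 0 < c := by
    have h1 : γf + γ < 0 := by linarith
    exact neg_pos.mpr (div_neg_of_neg_of_pos h1 hε)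
  set C1 : ℝ := C0 * Real.exp ((γf/ε) * t) with hC1
  have key : ∀ s ∈ Set.Iic t, ‖f s‖ ≤ C1 * Real.exp (c * s) := by
    intro s hs
    rw [Set.mem_Iic] at hs
    have hs0 : s ≤ 0 := hs.trans ht
    have hτ : (0:ℝ) ≤ (t - s)/ε := div_nonneg (by linarith) hε.le
    calc ‖f s‖ ≤ Real.exp (γf * ((t - s)/ε)) * ‖g2 s (xh s) (yh s)‖ := hF _ hτ _
      _ ≤ Real.exp (γf * ((t - s)/ε)) * (C0 * Real.exp (-(γ/ε) * s)) := by
          exact mul_le_mul_of_nonneg_left (hgb s hs0) (Real.exp_pos _).le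
      _ = C1 * Real.exp (c * s) := by
          rw [hC1, mul_assoc, ← Real.exp_add, mul_comm (Real.exp _), mul_assoc, ← Real.exp_add]
          congr 2
          rw [hcdef]
          simp only [div_eq_mul_inv]
          ring
  -- measurability
  have hxm : AEMeasurable xh (volume.restrict (Set.Iic t)) :=
    (hxc.mono (Set.Iic_subset_Iic.mpr ht)).aemeasurable measurableSet_Iic
  have hym : AEMeasurable yh (volume.restrict (Set.Iic t)) :=
    (hyc.mono (Set.Iic_subset_Iic.mpr ht)).aemeasurable measurableSet_Iic
  have hGm : Measurable (Function.uncurry (fun (p : E₁ × E₂) (s : ℝ) => g2 s p.1 p.2)) := by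
    apply measurable_uncurry_of_continuous_of_measurable
    · intro s
      have hl : LipschitzWith (⟨2 * K, by positivity⟩ : NNReal)
          (fun p : E₁ × E₂ => g2 s p.1 p.2) := by
        apply LipschitzWith.of_dist_le_mul
        intro p q
        have h1 : dist p.1 q.1 ≤ dist p q := by rw [Prod.dist_eq]; exact le_max_left _ _
        have h2 : dist p.2 q.2 ≤ dist p q := by rw [Prod.dist_eq]; exact le_max_right _ _
        have h3 := hg2l s p.1 p.2 q.1 q.2
        rw [dist_eq_norm] at h1 h2 ⊢
        show ‖g2 s p.1 p.2 - g2 s q.1 q.2‖ ≤ 2 * K * dist p q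
        nlinarith [dist_nonneg (x := p) (y := q)]
      exact hl.continuous
    · exact fun p => hg2m p.1 p.2
  have hgm : AEMeasurable (fun s => g2 s (xh s) (yh s)) (volume.restrict (Set.Iic t)) :=
    hGm.comp_aemeasurable (((hxm.prodMk hym)).prodMk aemeasurable_id)
  have hcont : Continuous (fun q : ℝ × E₂ => NormedSpace.exp (((t - q.1)/ε) • F) q.2) := by
    letI : NormedAlgebra ℚ (E₂ →L[ℝ] E₂) := NormedAlgebra.restrictScalars ℚ ℝ _
    have h1 : Continuous (fun q : ℝ × E₂ => NormedSpace.exp (((t - q.1)/ε) • F)) :=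
      NormedSpace.exp_continuous.comp
        (((continuous_const.sub continuous_fst).div_const ε).smul continuous_const)
    exact isBoundedBilinearMap_apply.continuous.comp (h1.prodMk continuous_snd)
  have hfm : AEStronglyMeasurable f (volume.restrict (Set.Iic t)) :=
    (hcont.measurable.comp_aemeasurable (aemeasurable_id.prodMk hgm)).aestronglyMeasurable
  -- integrability
  have hfi : IntegrableOn f (Set.Iic t) := by
    apply Integrable.mono' ((integrableOn_exp_mul_Iic' hc t).const_mul C1) hfm
    filter_upwards [ae_restrict_mem measurableSet_Iic] with s hs using key s hs
  refine ⟨hfi, ?_⟩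
  -- limit argument
  have hlim1 : Tendsto (fun u => NormedSpace.exp (((t - u)/ε) • F) (yh u)) atBot (𝓝 0) := by
    have hgt : Tendsto (fun u : ℝ => (Cy * Real.exp ((γf/ε) * t)) * Real.exp (c * u)) atBot (𝓝 0) := by
      have h1 : Tendsto (fun u : ℝ => c * u) atBot atBot :=
        Tendsto.const_mul_atBot hc tendsto_id
      have h2 : Tendsto (fun u : ℝ => Real.exp (c * u)) atBot (𝓝 0) :=
        Real.tendsto_exp_atBot.comp h1
      simpa using h2.const_mul (Cy * Real.exp ((γf/ε) * t))
    apply squeeze_zero_norm' ?_ hgt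
    · filter_upwards [eventually_le_atBot t] with u hu
      have hu0 : u ≤ 0 := hu.trans ht
      have hτ : (0:ℝ) ≤ (t - u)/ε := div_nonneg (by linarith) hε.le
      calc ‖NormedSpace.exp (((t - u)/ε) • F) (yh u)‖
          ≤ Real.exp (γf * ((t - u)/ε)) * ‖yh u‖ := hF _ hτ _
        _ ≤ Real.exp (γf * ((t - u)/ε)) * (Cy * Real.exp (-(γ/ε) * u)) :=
            mul_le_mul_of_nonneg_left (hy u hu0) (Real.exp_pos _).le
        _ = (Cy * Real.exp ((γf/ε) * t)) * Real.exp (c * u) := by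
            rw [mul_assoc, ← Real.exp_add, mul_comm (Real.exp _), mul_assoc, ← Real.exp_add]
            congr 2
            rw [hcdef]
            simp only [div_eq_mul_inv]
            ring
  have hlim2 : Tendsto (fun u => (1/ε) • ∫ s in u..t, f s) atBot
      (𝓝 ((1/ε) • ∫ s in Set.Iic t, f s)) :=
    (intervalIntegral_tendsto_integral_Iic t hfi tendsto_id).const_smul _
  have hsum := hlim1.add hlim2
  rw [zero_add] at hsum
  have heq : (fun u => NormedSpace.exp (((t - u)/ε) • F) (yh u) + (1/ε) • ∫ s in u..t, f s)
      =ᶠ[atBot] fun _ => yh t := by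
    filter_upwards [eventually_le_atBot t] with u hu
    exact (hvocy u t hu ht).symm
  have hconst : Tendsto (fun _ : ℝ => yh t) atBot (𝓝 ((1/ε) • ∫ s in Set.Iic t, f s)) :=
    hsum.congr' heq
  have := tendsto_nhds_unique hconst tendsto_const_nhds
  rw [LPfast]
  exact this.symm
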